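/- Let h be an AND-NOT BN, let C be a cycle of IG(h), and let k be a vertex witnessing the inconsistency of C in IG(h) such that the update function h_k is constant. Then some vertex of C has a constant update function in P^ω(h); in particular, C is not a cycle of IG(P^ω(h)). -/

import Mathlib

/-- A trap set of a directed graph (given by its arc relation `E`):
a nonempty set of vertices with no outgoing arc. -/
def TrapSet {V : Type*} (E : V → V → Prop) (A : Set V) : Prop :=
  A.Nonempty ∧ ∀ x ∈ A, ∀ y, E x y → y ∈ A

/-- An attractor: an inclusion-minimal trap set. -/
def Attractor {V : Type*} (E : V → V → Prop) (A : Set V) : Prop :=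
  TrapSet E A ∧ ∀ B ⊆ A, TrapSet E B → B = A

/-- Arc relation of the asynchronous state transition graph of a Boolean network `f`. -/
def astg {V : Type*} (f : V → (V → Bool) → Bool) (x y : V → Bool) : Prop :=
  ∃ v, y v = f v x ∧ y v ≠ x v ∧ ∀ u, u ≠ v → y u = x u

/-- `f` is an AND-NOT Boolean network: every update function is constant or a
conjunction of literals over pairwise distinct variables. -/
def IsAndNot {V : Type*} [DecidableEq V] (f : V → (V → Bool) → Bool) : Prop :=
  ∀ v, (∃ b, ∀ x, f v x = b) ∨
    ∃ (L : Finset V) (sgn : V → Bool), ∀ x, f v x = decide (∀ u ∈ L, x u = sgn u)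

/-- Positive arc `u → v` of the local influence graph of `f` at state `x`. -/
def localPos {V : Type*} [DecidableEq V] (f : V → (V → Bool) → Bool)
    (x : V → Bool) (u v : V) : Prop :=
  f v (Function.update x u false) = false ∧ f v (Function.update x u true) = true

/-- Negative arc `u → v` of the local influence graph of `f` at state `x`. -/
def localNeg {V : Type*} [DecidableEq V] (f : V → (V → Bool) → Bool)
    (x : V → Bool) (u v : V) : Prop :=
  f v (Function.update x u false) = true ∧ f v (Function.update x u true) = false

/-- Positive arc of the global influence graph of `f`. -/
def igPos {V : Type*} [DecidableEq V] (f : V → (V → Bool) → Bool) (u v : V) : Prop :=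
  ∃ x, localPos f x u v

/-- Negative arc of the global influence graph of `f`. -/
def igNeg {V : Type*} [DecidableEq V] (f : V → (V → Bool) → Bool) (u v : V) : Prop :=
  ∃ x, localNeg f x u v

/-- The data of a cycle in a signed directed graph: `n ≥ 1` pairwise distinct vertices
`vtx 0, …, vtx (n-1)` together with a sign `sgn i` for the arc `vtx i → vtx ((i+1) % n)`
(`true` = positive, `false` = negative). -/
structure CycleData (V : Type*) where
  n : ℕ
  npos : 0 < n
  vtx : ℕ → V
  sgn : ℕ → Bool
  inj : ∀ i, i < n → ∀ j, j < n → vtx i = vtx j → i = j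

/-- `C` is a cycle of the signed directed graph with positive arcs `P` and negative arcs `N`. -/
def IsCycleIn {V : Type*} (C : CycleData V) (P N : V → V → Prop) : Prop :=
  ∀ i, i < C.n →
    if C.sgn i then P (C.vtx i) (C.vtx ((i + 1) % C.n))
    else N (C.vtx i) (C.vtx ((i + 1) % C.n))

/-- `v` is a vertex of the cycle `C`. -/
def InCycle {V : Type*} (C : CycleData V) (v : V) : Prop :=
  ∃ i, i < C.n ∧ C.vtx i = v

/-- The positive arc `u → v` is an arc of the cycle `C`. -/
def PosArcOf {V : Type*} (C : CycleData V) (u v : V) : Prop :=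
  ∃ i, i < C.n ∧ C.vtx i = u ∧ C.vtx ((i + 1) % C.n) = v ∧ C.sgn i = true

/-- The negative arc `u → v` is an arc of the cycle `C`. -/
def NegArcOf {V : Type*} (C : CycleData V) (u v : V) : Prop :=
  ∃ i, i < C.n ∧ C.vtx i = u ∧ C.vtx ((i + 1) % C.n) = v ∧ C.sgn i = false

/-- The cycle is even: it has an even number of negative arcs. -/
def IsEven {V : Type*} (C : CycleData V) : Prop :=
  Even (((Finset.range C.n).filter (fun i => C.sgn i = false)).card)

/-- `(u, v1, v2)` is a delocalizing triple of the cycle `C` in the signed graph `(P, N)`. -/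
def DelocTriple {V : Type*} (C : CycleData V) (P N : V → V → Prop) (u v1 v2 : V) : Prop :=
  InCycle C v1 ∧ InCycle C v2 ∧ v1 ≠ v2 ∧ P u v1 ∧ N u v2 ∧
    ¬ PosArcOf C u v1 ∧ ¬ NegArcOf C u v2

/-- The cycle `C` is strong in `(P, N)`: it admits no delocalizing triple. -/
def IsStrong {V : Type*} (C : CycleData V) (P N : V → V → Prop) : Prop :=
  ∀ u v1 v2, ¬ DelocTriple C P N u v1 v2

/-- All-positive path from `k` through the intermediate vertices `is` to the endpoint. -/
def PosPath {V : Type*} (P : V → V → Prop) : V → List V → V → Prop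
  | k, [], t => P k t
  | k, j :: js, t => P k j ∧ PosPath P j js t

/-- Path from `k` through intermediate vertices `js` to the endpoint whose arcs are all
positive except the last one, which is negative. -/
def PosNegPath {V : Type*} (P N : V → V → Prop) : V → List V → V → Prop
  | k, [], u => N k u
  | k, j :: js, u => P k j ∧ PosNegPath P N j js u

/-- `k` witnesses the inconsistency of the cycle `C` in the signed graph `(P, N)`. -/
def WitnessesIncons {V : Type*} (P N : V → V → Prop) (C : CycleData V) (k : V) : Prop :=
  ∃ (t u : V) (is js : List V),
    PosPath P k is t ∧ PosNegPath P N k js u ∧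
    InCycle C t ∧ InCycle C u ∧ t ≠ u ∧
    ¬ PosArcOf C k t ∧ ¬ NegArcOf C k u ∧
    ∀ j ∈ js, ∃! p : V × Bool, cond p.2 (P p.1 j) (N p.1 j)

/-- The cycle `C` is inconsistent in the signed graph `(P, N)`. -/
def Inconsistent {V : Type*} (P N : V → V → Prop) (C : CycleData V) : Prop :=
  ∃ k, WitnessesIncons P N C k

/-- The cycle `C` is consistent in the signed graph `(P, N)`. -/
def Consistent {V : Type*} (P N : V → V → Prop) (C : CycleData V) : Prop :=
  ¬ Inconsistent P N C

/-- `J` dominates the signed directed graph `(P, N)`. -/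
def Dominates {V : Type*} (J : Set V) (P N : V → V → Prop) : Prop :=
  (∀ C : CycleData V, IsCycleIn C P N → IsEven C → Consistent P N C →
    ∃ v ∈ J, InCycle C v) ∧
  (∀ C : CycleData V, IsCycleIn C P N → IsEven C → IsStrong C P N → Inconsistent P N C →
    (∃ v ∈ J, InCycle C v) ∨ ∃ k ∈ J, WitnessesIncons P N C k)

open Classical in
/-- The one-step percolation of a Boolean network: substitute the values of all
constant update functions into every update function. -/
noncomputable def percolate {V : Type*} (f : V → (V → Bool) → Bool) :
    V → (V → Bool) → Bool :=
  fun v x => f v (fun u => if h : ∃ b : Bool, ∀ y, f u y = b then h.choose else x u)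


section AuxPerc

variable {V : Type*} [DecidableEq V]

open Classical in
lemma percolate_apply (f : V → (V → Bool) → Bool) (v : V) (x : V → Bool) :
    percolate f v x =
      f v (fun u => if hc : ∃ b : Bool, ∀ y, f u y = b then hc.choose else x u) := rfl

lemma choose_eq {f : V → (V → Bool) → Bool} {u : V} {b : Bool}
    (hc : ∃ b : Bool, ∀ y, f u y = b) (hb : ∀ y, f u y = b) : hc.choose = b := by
  have h1 := hc.choose_spec (fun _ => false)
  rw [hb (fun _ => false)] at h1
  exact h1.symm

open Classical in
lemma perc_state_const {f : V → (V → Bool) → Bool} {u : V} {b : Bool}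
    (hb : ∀ y, f u y = b) (x : V → Bool) :
    (fun w => if hc : ∃ c : Bool, ∀ y, f w y = c then hc.choose else x w) u = b := by
  have hcu : ∃ c : Bool, ∀ y, f u y = c := ⟨b, hb⟩
  show (if hc : ∃ c : Bool, ∀ y, f u y = c then hc.choose else x u) = b
  rw [dif_pos hcu]
  exact choose_eq hcu hb

open Classical in
lemma perc_state_nonconst {f : V → (V → Bool) → Bool} {u : V}
    (hnc : ¬ ∃ c : Bool, ∀ y, f u y = c) (x : V → Bool) :
    (fun w => if hc : ∃ c : Bool, ∀ y, f w y = c then hc.choose else x w) u = x u :=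
  dif_neg hnc

lemma perc_const (f : V → (V → Bool) → Bool) (v : V) (b : Bool)
    (hb : ∀ x, f v x = b) : ∀ x, percolate f v x = b := fun _ => hb _

lemma iter_const (f : V → (V → Bool) → Bool) (v : V) (b : Bool) {m m' : ℕ}
    (hmm : m ≤ m') (hb : ∀ x, percolate^[m] f v x = b) :
    ∀ x, percolate^[m'] f v x = b := by
  obtain ⟨j, rfl⟩ := Nat.exists_eq_add_of_le hmm
  clear hmm
  induction j with
  | zero => exact hb
  | succ j ih =>
      intro x
      rw [show m + (j + 1) = (m + j) + 1 from rfl, Function.iterate_succ_apply']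
      exact perc_const _ v b ih x

lemma bool_resolve {a b : Bool} (hab : a ≠ !b) : a = b := by
  cases a <;> cases b <;> simp_all

/-- Invariant for iterated percolation of one AND-NOT coordinate. -/
def GoodAt (f : V → (V → Bool) → Bool) (Lv : Finset V) (sv : V → Bool) (v : V) : Prop :=
  ((∀ x, f v x = false) ∧ ∃ u ∈ Lv, ∀ x, f u x = !(sv u)) ∨
  (∃ L' : Finset V, L' ⊆ Lv ∧ (∀ x, f v x = decide (∀ u ∈ L', x u = sv u)) ∧
    ∀ u ∈ Lv, u ∉ L' → ∀ x, f u x = sv u)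

lemma goodAt_step (f : V → (V → Bool) → Bool) (Lv : Finset V) (sv : V → Bool) (v : V)
    (hv : GoodAt f Lv sv v) : GoodAt (percolate f) Lv sv v := by
  classical
  rcases hv with ⟨hvf, u, hu, hufix⟩ | ⟨L', hL'sub, hform, hrem⟩
  · exact Or.inl ⟨perc_const f v false hvf, u, hu, perc_const f u _ hufix⟩
  · by_cases hbad : ∃ u ∈ L', ∀ y, f u y = !(sv u)
    · obtain ⟨u, huL, hufix⟩ := hbad
      refine Or.inl ⟨fun x => ?_, u, hL'sub huL, perc_const f u _ hufix⟩
      rw [percolate_apply, hform, decide_eq_false_iff_not]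
      intro hall
      have h1 := (perc_state_const hufix _).symm.trans (hall u huL)
      exact (Bool.not_ne_self (sv u)) h1
    · refine Or.inr ⟨L'.filter (fun u => ¬ ∃ b : Bool, ∀ y, f u y = b),
        (Finset.filter_subset _ _).trans hL'sub, ?_, ?_⟩
      · -- the new AND form
        have hconstval : ∀ u ∈ L', (∃ b : Bool, ∀ y, f u y = b) → ∀ y, f u y = sv u := by
          intro u huL hcu
          obtain ⟨b, hb⟩ := hcu
          have hbne : b ≠ !(sv u) := fun hbe => hbad ⟨u, huL, by rwa [hbe] at hb⟩
          rwa [bool_resolve hbne] at hb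
        intro x
        rw [percolate_apply, hform, decide_eq_decide]
        constructor
        · intro hall u hu
          have hu' := Finset.mem_filter.mp hu
          exact (perc_state_nonconst hu'.2 x).symm.trans (hall u hu'.1)
        · intro hall u huL
          by_cases hcu : ∃ b : Bool, ∀ y, f u y = b
          · exact perc_state_const (hconstval u huL hcu) x
          · exact (perc_state_nonconst hcu x).trans
              (hall u (Finset.mem_filter.mpr ⟨huL, hcu⟩))
      · intro u huLv hunot
        by_cases huL' : u ∈ L'
        · have hcu : ∃ b : Bool, ∀ y, f u y = b := by
            by_contra hnc
            exact hunot (Finset.mem_filter.mpr ⟨huL', hnc⟩)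
          obtain ⟨b, hb⟩ := hcu
          have hbne : b ≠ !(sv u) := fun hbe => hbad ⟨u, huL', by rwa [hbe] at hb⟩
          rw [bool_resolve hbne] at hb
          exact perc_const f u _ hb
        · exact perc_const f u _ (hrem u huLv huL')

lemma goodAt_iter {h : V → (V → Bool) → Bool} {Lv : Finset V} {sv : V → Bool} {v : V}
    (hform : ∀ x, h v x = decide (∀ u ∈ Lv, x u = sv u)) (m : ℕ) :
    GoodAt (percolate^[m] h) Lv sv v := by
  induction m with
  | zero => exact Or.inr ⟨Lv, Finset.Subset.refl _, hform, fun u hu hu' => absurd hu hu'⟩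
  | succ m ih =>
      rw [Function.iterate_succ_apply']
      exact goodAt_step _ _ _ _ ih

lemma pos_form {h : V → (V → Bool) → Bool} (hh : IsAndNot h) {k t : V}
    (hkt : igPos h k t) :
    ∃ (Lt : Finset V) (st : V → Bool),
      (∀ x, h t x = decide (∀ u ∈ Lt, x u = st u)) ∧ k ∈ Lt ∧ st k = true := by
  obtain ⟨x, hx0, hx1⟩ := hkt
  rcases hh t with ⟨b, hb⟩ | ⟨Lt, st, hform⟩
  · rw [hb] at hx0 hx1; rw [hx0] at hx1; exact absurd hx1 Bool.false_ne_true
  refine ⟨Lt, st, hform, ?_⟩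
  rw [hform] at hx0 hx1
  have h1 : ∀ u ∈ Lt, Function.update x k true u = st u := of_decide_eq_true hx1
  have h0 : ¬ ∀ u ∈ Lt, Function.update x k false u = st u := of_decide_eq_false hx0
  push_neg at h0
  obtain ⟨u, huL, hune⟩ := h0
  have huk : u = k := by
    by_contra hne
    apply hune
    rw [Function.update_of_ne hne]
    rw [← h1 u huL, Function.update_of_ne hne]
  subst huk
  refine ⟨huL, ?_⟩
  have h2 := h1 u huL
  rw [Function.update_self] at h2
  exact h2.symm

lemma neg_form {h : V → (V → Bool) → Bool} (hh : IsAndNot h) {k t : V}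
    (hkt : igNeg h k t) :
    ∃ (Lt : Finset V) (st : V → Bool),
      (∀ x, h t x = decide (∀ u ∈ Lt, x u = st u)) ∧ k ∈ Lt ∧ st k = false := by
  obtain ⟨x, hx0, hx1⟩ := hkt
  rcases hh t with ⟨b, hb⟩ | ⟨Lt, st, hform⟩
  · rw [hb] at hx0 hx1; rw [hx0] at hx1; exact absurd hx1.symm Bool.false_ne_true
  refine ⟨Lt, st, hform, ?_⟩
  rw [hform] at hx0 hx1
  have h1 : ∀ u ∈ Lt, Function.update x k false u = st u := of_decide_eq_true hx0
  have h0 : ¬ ∀ u ∈ Lt, Function.update x k true u = st u := of_decide_eq_false hx1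
  push_neg at h0
  obtain ⟨u, huL, hune⟩ := h0
  have huk : u = k := by
    by_contra hne
    apply hune
    rw [Function.update_of_ne hne]
    rw [← h1 u huL, Function.update_of_ne hne]
  subst huk
  refine ⟨huL, ?_⟩
  have h2 := h1 u huL
  rw [Function.update_self] at h2
  exact h2.symm

lemma lit_arc {h : V → (V → Bool) → Bool} {j : V} {Lj : Finset V} {sj : V → Bool}
    (hform : ∀ x, h j x = decide (∀ u ∈ Lj, x u = sj u)) {u : V} (hu : u ∈ Lj) :
    cond (sj u) (igPos h u j) (igNeg h u j) := by
  have key1 : h j (Function.update (fun w => sj w) u (sj u)) = true := by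
    rw [hform, decide_eq_true_iff]
    intro w hw
    by_cases hwu : w = u
    · subst hwu; rw [Function.update_self]
    · rw [Function.update_of_ne hwu]
  have key0 : h j (Function.update (fun w => sj w) u (!(sj u))) = false := by
    rw [hform, decide_eq_false_iff_not]
    intro hall
    have := hall u hu
    rw [Function.update_self] at this
    exact (Bool.not_ne_self (sj u)) this
  cases hsu : sj u
  · -- negative arc
    rw [hsu] at key1 key0
    exact ⟨fun w => sj w, key1, by simpa using key0⟩
  · -- positive arc
    rw [hsu] at key1 key0
    exact ⟨fun w => sj w, by simpa using key0, key1⟩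

lemma stepB {h : V → (V → Bool) → Bool} (hh : IsAndNot h) {k t : V} (hkt : igPos h k t)
    {m : ℕ} (hk : ∀ x, percolate^[m] h k x = false) :
    ∃ M, ∀ x, percolate^[M] h t x = false := by
  obtain ⟨Lt, st, hform, hkL, hsk⟩ := pos_form hh hkt
  rcases goodAt_iter hform m with ⟨hf, -⟩ | ⟨L', hsub, hform', hrem⟩
  · exact ⟨m, hf⟩
  · have hkL' : k ∈ L' := by
      by_contra hkn
      have h1 := hrem k hkL hkn (fun _ => false)
      rw [hk, hsk] at h1
      exact Bool.false_ne_true h1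
    refine ⟨m + 1, fun x => ?_⟩
    rw [Function.iterate_succ_apply', percolate_apply, hform', decide_eq_false_iff_not]
    intro hall
    have h1 := (perc_state_const hk x).symm.trans (hall k hkL')
    rw [hsk] at h1
    exact Bool.false_ne_true h1

lemma stepB' {h : V → (V → Bool) → Bool} (hh : IsAndNot h) {k t : V} (hkt : igNeg h k t)
    {m : ℕ} (hk : ∀ x, percolate^[m] h k x = true) :
    ∃ M, ∀ x, percolate^[M] h t x = false := by
  obtain ⟨Lt, st, hform, hkL, hsk⟩ := neg_form hh hkt
  rcases goodAt_iter hform m with ⟨hf, -⟩ | ⟨L', hsub, hform', hrem⟩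
  · exact ⟨m, hf⟩
  · have hkL' : k ∈ L' := by
      by_contra hkn
      have h1 := hrem k hkL hkn (fun _ => false)
      rw [hk, hsk] at h1
      exact Bool.false_ne_true h1.symm
    refine ⟨m + 1, fun x => ?_⟩
    rw [Function.iterate_succ_apply', percolate_apply, hform', decide_eq_false_iff_not]
    intro hall
    have h1 := (perc_state_const hk x).symm.trans (hall k hkL')
    rw [hsk] at h1
    exact Bool.false_ne_true h1.symm

lemma stepC {h : V → (V → Bool) → Bool} (hh : IsAndNot h) {k j : V} (hkj : igPos h k j)
    (huniq : ∃! p : V × Bool, cond p.2 (igPos h p.1 j) (igNeg h p.1 j))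
    {m : ℕ} (hk : ∀ x, percolate^[m] h k x = true) :
    ∀ x, percolate^[m + 1] h j x = true := by
  obtain ⟨Lj, sj, hform, hkL, hsk⟩ := pos_form hh hkj
  obtain ⟨p, hp, hpu⟩ := huniq
  have hpk : p = (k, true) := (hpu (k, true) (by simpa using hkj)).symm
  have hlit : ∀ u ∈ Lj, u = k ∧ sj u = true := by
    intro u hu
    have harc := lit_arc hform hu
    have := hpu (u, sj u) harc
    rw [hpk] at this
    exact ⟨congrArg Prod.fst this, congrArg Prod.snd this⟩
  rcases goodAt_iter hform m with ⟨-, u, hu, hufix⟩ | ⟨L', hsub, hform', -⟩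
  · obtain ⟨huk, hsu⟩ := hlit u hu
    subst huk
    have h1 := hufix (fun _ => false)
    rw [hk, hsu] at h1
    exact absurd h1.symm Bool.false_ne_true
  · intro x
    rw [Function.iterate_succ_apply', percolate_apply, hform', decide_eq_true_iff]
    intro u huL'
    obtain ⟨huk, hsu⟩ := hlit u (hsub huL')
    subst huk
    rw [hsu]
    exact perc_state_const hk x

lemma chainFalse {h : V → (V → Bool) → Bool} (hh : IsAndNot h) :
    ∀ (is : List V) (k t : V) (m : ℕ),
      (∀ x, percolate^[m] h k x = false) → PosPath (igPos h) k is t →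
      ∃ M, ∀ x, percolate^[M] h t x = false
  | [], k, t, m, hk, hp => stepB hh hp hk
  | i :: is, k, t, m, hk, hp => by
      obtain ⟨M, hM⟩ := stepB hh hp.1 hk
      exact chainFalse hh is i t M hM hp.2

lemma chainTrue {h : V → (V → Bool) → Bool} (hh : IsAndNot h) :
    ∀ (js : List V) (k u : V) (m : ℕ),
      (∀ x, percolate^[m] h k x = true) →
      PosNegPath (igPos h) (igNeg h) k js u →
      (∀ j ∈ js, ∃! p : V × Bool, cond p.2 (igPos h p.1 j) (igNeg h p.1 j)) →
      ∃ M, ∀ x, percolate^[M] h u x = false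
  | [], k, u, m, hk, hp, _ => stepB' hh hp hk
  | j :: js, k, u, m, hk, hp, hjs => by
      have hj := stepC hh hp.1 (hjs j List.mem_cons_self) hk
      exact chainTrue hh js j u (m + 1) hj hp.2
        (fun j' hj' => hjs j' (List.mem_cons_of_mem _ hj'))

end AuxPerc

theorem stmt_18 {V : Type*} [Fintype V] [DecidableEq V]
    (h : V → (V → Bool) → Bool) (hh : IsAndNot h)
    (C : CycleData V) (hC : IsCycleIn C (igPos h) (igNeg h)) (k : V)
    (hk : WitnessesIncons (igPos h) (igNeg h) C k)
    (hconst : ∃ b, ∀ x, h k x = b)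
    (g : V → (V → Bool) → Bool) (n : ℕ)
    (hg : g = percolate^[n] h) (hfix : percolate g = g) :
    (∃ v, InCycle C v ∧ ∃ b, ∀ x, g v x = b) ∧
      ¬ IsCycleIn C (igPos g) (igNeg g) := by
  obtain ⟨t, u, is, js, hpp, hpn, htC, huC, htu, _, _, hjs⟩ := hk
  -- produce a cycle vertex constant false in some iterate
  have hmain : ∃ (v : V) (M : ℕ), InCycle C v ∧ ∀ x, percolate^[M] h v x = false := by
    obtain ⟨b, hb⟩ := hconst
    have hb0 : ∀ x, percolate^[0] h k x = b := hb
    cases b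
    · obtain ⟨M, hM⟩ := chainFalse hh is k t 0 hb0 hpp
      exact ⟨t, M, htC, hM⟩
    · obtain ⟨M, hM⟩ := chainTrue hh js k u 0 hb0 hpn hjs
      exact ⟨u, M, huC, hM⟩
  obtain ⟨v, M, hvC, hvM⟩ := hmain
  have hgeq : ∀ j : ℕ, percolate^[n + j] h = g := by
    intro j
    induction j with
    | zero => exact hg.symm
    | succ j ih =>
        rw [show n + (j + 1) = (n + j) + 1 from rfl, Function.iterate_succ_apply', ih, hfix]
  have hgv : ∀ x, g v x = false := by
    have h1 : ∀ x, percolate^[n + M] h v x = false :=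
      iter_const h v false (Nat.le_add_left M n) hvM
    rwa [hgeq M] at h1
  refine ⟨⟨v, hvC, false, hgv⟩, ?_⟩
  intro hcyc
  obtain ⟨i, hi, hvi⟩ := hvC
  have hj : (i + (C.n - 1)) % C.n < C.n := Nat.mod_lt _ C.npos
  have hsucc : ((i + (C.n - 1)) % C.n + 1) % C.n = i := by
    rw [Nat.mod_add_mod, show i + (C.n - 1) + 1 = i + C.n by omega,
      Nat.add_mod_right]
    exact Nat.mod_eq_of_lt hi
  have harc := hcyc _ hj
  rw [hsucc, hvi] at harc
  cases hs : C.sgn ((i + (C.n - 1)) % C.n) <;> rw [hs] at harc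
  · simp only [if_neg Bool.false_ne_true] at harc
    obtain ⟨x, hx0, _⟩ := harc
    rw [hgv] at hx0
    exact Bool.false_ne_true hx0
  · simp only [if_pos rfl] at harc
    obtain ⟨x, _, hx1⟩ := harc
    rw [hgv] at hx1
    exact Bool.false_ne_true hx1
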